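/- For every α > 1 there exists a constant k > 0 such that the Cauchy-type density f_α satisfies (f_α * f_α)(x) ≥ k · f_α(x) for every x ∈ ℝ. -/

import Mathlib

open Real MeasureTheory

/-- The Cauchy-type probability density `f_α(y) = r_α / (1 + |y|^α)` on `ℝ`, where
`r_α = (∫ dy/(1+|y|^α))⁻¹` is the normalizing constant. -/
noncomputable def cauchyType (α : ℝ) (y : ℝ) : ℝ :=
  (∫ z : ℝ, (1 + |z| ^ α)⁻¹)⁻¹ * (1 + |y| ^ α)⁻¹

lemma cauchy_aux_pos (α : ℝ) (y : ℝ) : (0:ℝ) < 1 + |y| ^ α := by positivity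

lemma cauchy_bound {α x : ℝ} (hα : 1 < α) (hx : 0 ≤ x) :
    (1 + x) ^ α ≤ 2 ^ α * (1 + x ^ α) := by
  have h0 : (0:ℝ) ≤ α := by linarith
  have hmax : (0:ℝ) < max 1 x := lt_of_lt_of_le one_pos (le_max_left _ _)
  have h1 : (1 + x) ^ α ≤ (2 * max 1 x) ^ α := by
    apply Real.rpow_le_rpow (by positivity)
    · have := le_max_right (1:ℝ) x
      have := le_max_left (1:ℝ) x
      nlinarith
    · exact h0
  calc (1 + x) ^ α ≤ (2 * max 1 x) ^ α := h1
    _ = 2 ^ α * (max 1 x) ^ α := Real.mul_rpow (by norm_num) hmax.le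
    _ ≤ 2 ^ α * (1 + x ^ α) := by
        apply mul_le_mul_of_nonneg_left _ (by positivity)
        rcases max_cases (1:ℝ) x with ⟨h, _⟩ | ⟨h, _⟩
        · rw [h, Real.one_rpow]; nlinarith [Real.rpow_nonneg hx α]
        · rw [h]; nlinarith [Real.rpow_nonneg hx α]

lemma cauchy_integrable {α : ℝ} (hα : 1 < α) :
    Integrable (fun y : ℝ => (1 + |y| ^ α)⁻¹) := by
  have h0 : (0:ℝ) ≤ α := by linarith
  have hJ : Integrable (fun x : ℝ => (1 + ‖x‖) ^ (-α)) :=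
    integrable_one_add_norm (by simpa using hα)
  refine (hJ.const_mul (2 ^ α)).mono' ?_ ?_
  · apply Measurable.aestronglyMeasurable
    fun_prop
  · filter_upwards with y
    rw [Real.norm_eq_abs, abs_of_nonneg (by positivity), Real.norm_eq_abs]
    have hb : (1 + |y|) ^ α ≤ 2 ^ α * (1 + |y| ^ α) := cauchy_bound hα (abs_nonneg y)
    calc (1 + |y| ^ α)⁻¹ = 2 ^ α * (2 ^ α * (1 + |y| ^ α))⁻¹ := by
          rw [mul_inv, ← mul_assoc, mul_inv_cancel₀ (by positivity), one_mul]
      _ ≤ 2 ^ α * ((1 + |y|) ^ α)⁻¹ := by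
          apply mul_le_mul_of_nonneg_left (inv_anti₀ (by positivity) hb) (by positivity)
      _ = 2 ^ α * (1 + |y|) ^ (-α) := by rw [Real.rpow_neg (by positivity)]

lemma cauchy_integral_pos {α : ℝ} (hα : 1 < α) :
    (0:ℝ) < ∫ z : ℝ, (1 + |z| ^ α)⁻¹ := by
  rw [integral_pos_iff_support_of_nonneg (fun y => by positivity) (cauchy_integrable hα)]
  have : Function.support (fun y : ℝ => (1 + |y| ^ α)⁻¹) = Set.univ := by
    ext y; simp [Function.support, (cauchy_aux_pos α y).ne']
  rw [this]
  simp

/-- For every `α > 1` there is a constant `k > 0` with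
`(f_α * f_α)(x) ≥ k · f_α(x)` for all `x ∈ ℝ`. -/
theorem statement_11 (α : ℝ) (hα : 1 < α) :
    ∃ k : ℝ, 0 < k ∧ ∀ x : ℝ,
      k * cauchyType α x ≤ ∫ y : ℝ, cauchyType α y * cauchyType α (x - y) := by
  set r : ℝ := (∫ z : ℝ, (1 + |z| ^ α)⁻¹)⁻¹ with hr
  have hrpos : 0 < r := inv_pos.mpr (cauchy_integral_pos hα)
  have h2pos : (0:ℝ) < 1 + 2 ^ α := by positivity
  refine ⟨r / (2 * (1 + 2 ^ α)), by positivity, fun x => ?_⟩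
  -- integrability of the convolution integrand
  have hmeas : Measurable (fun y : ℝ => cauchyType α y * cauchyType α (x - y)) := by
    unfold cauchyType; fun_prop
  have hnn : ∀ y : ℝ, 0 ≤ cauchyType α y * cauchyType α (x - y) := by
    intro y; unfold cauchyType
    have := cauchy_aux_pos α y; have := cauchy_aux_pos α (x - y)
    positivity
  have hint : Integrable (fun y : ℝ => cauchyType α y * cauchyType α (x - y)) := by
    refine (((cauchy_integrable hα).const_mul (r * r)).mono' hmeas.aestronglyMeasurable ?_)
    filter_upwards with y
    rw [Real.norm_eq_abs, abs_of_nonneg (hnn y)]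
    unfold cauchyType
    rw [← hr]
    have h1 : (1 + |x - y| ^ α)⁻¹ ≤ 1 := by
      rw [inv_le_one₀ (cauchy_aux_pos α (x - y))]
      have := Real.rpow_nonneg (abs_nonneg (x - y)) α; linarith
    have h2 : (0:ℝ) < (1 + |y| ^ α)⁻¹ := inv_pos.mpr (cauchy_aux_pos α y)
    calc r * (1 + |y| ^ α)⁻¹ * (r * (1 + |x - y| ^ α)⁻¹)
        ≤ r * (1 + |y| ^ α)⁻¹ * (r * 1) := by
          apply mul_le_mul_of_nonneg_left _ (by positivity)
          exact mul_le_mul_of_nonneg_left h1 hrpos.le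
      _ = r * r * (1 + |y| ^ α)⁻¹ := by ring
  -- restrict to [0,1]
  have hsub : ∫ y in Set.Icc (0:ℝ) 1, cauchyType α y * cauchyType α (x - y)
      ≤ ∫ y : ℝ, cauchyType α y * cauchyType α (x - y) :=
    setIntegral_le_integral hint (Filter.Eventually.of_forall hnn)
  refine le_trans ?_ hsub
  -- constant lower bound on [0,1]
  set c : ℝ := r / (2 * (1 + 2 ^ α)) * cauchyType α x with hc
  have hbound : ∀ y ∈ Set.Icc (0:ℝ) 1, c ≤ cauchyType α y * cauchyType α (x - y) := by
    rintro y ⟨hy0, hy1⟩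
    have hxpos := cauchy_aux_pos α x
    have hypos := cauchy_aux_pos α y
    have hxy := cauchy_aux_pos α (x - y)
    have h1 : cauchyType α y ≥ r / 2 := by
      unfold cauchyType; rw [← hr]
      have : |y| ^ α ≤ 1 := by
        rw [abs_of_nonneg hy0]
        exact Real.rpow_le_one hy0 hy1 (by linarith)
      have : (2:ℝ)⁻¹ ≤ (1 + |y| ^ α)⁻¹ := inv_anti₀ hypos (by linarith)
      calc r / 2 = r * 2⁻¹ := by ring
        _ ≤ r * (1 + |y| ^ α)⁻¹ := mul_le_mul_of_nonneg_left this hrpos.le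
    have h2 : cauchyType α (x - y) ≥ r * ((1 + 2 ^ α) * (1 + |x| ^ α))⁻¹ := by
      unfold cauchyType; rw [← hr]
      apply mul_le_mul_of_nonneg_left _ hrpos.le
      apply inv_anti₀ hxy
      have habs : |x - y| ≤ 1 + |x| := by
        have := abs_sub_abs_le_abs_sub x y
        have h3 : |x - y| ≤ |x| + |y| := abs_sub x y
        have : |y| ≤ 1 := by rw [abs_of_nonneg hy0]; exact hy1
        linarith
      have h4 : |x - y| ^ α ≤ (1 + |x|) ^ α :=
        Real.rpow_le_rpow (abs_nonneg _) habs (by linarith)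
      have h5 : (1 + |x|) ^ α ≤ 2 ^ α * (1 + |x| ^ α) := cauchy_bound hα (abs_nonneg x)
      nlinarith [Real.rpow_nonneg (abs_nonneg x) α, Real.rpow_pos_of_pos (by norm_num : (0:ℝ)<2) α]
    have hct_y_nn : 0 ≤ cauchyType α y := by unfold cauchyType; rw [← hr]; positivity
    have hctx : cauchyType α x = r * (1 + |x| ^ α)⁻¹ := by unfold cauchyType; rw [← hr]
    calc c = (r / 2) * (r * ((1 + 2 ^ α) * (1 + |x| ^ α))⁻¹) := by
          rw [hc, hctx]
          field_simp
      _ ≤ cauchyType α y * cauchyType α (x - y) := by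
          apply mul_le_mul h1 h2 (by positivity) hct_y_nn
  have hvol : (volume (Set.Icc (0:ℝ) 1)).toReal = 1 := by simp
  have := setIntegral_ge_of_const_le_real (μ := volume) measurableSet_Icc
    (by simp : volume (Set.Icc (0:ℝ) 1) ≠ ⊤) hbound (hint.integrableOn)
  rw [show volume.real (Set.Icc (0:ℝ) 1) = 1 from hvol, mul_one] at this
  calc r / (2 * (1 + 2 ^ α)) * cauchyType α x = c := hc.symm
    _ ≤ _ := this
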